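/- Let n, d, m ≥ 1 be integers, let X_1,…,X_n ∈ ℝ^{d×m} be matrices, let λ > 0, and for each j ∈ {1,…,n} let φ_j : ℝ^m → ℝ be convex, differentiable, and l_j-smooth with l_j > 0, i.e. ‖∇φ_j(x) − ∇φ_j(y)‖ ≤ l_j·‖x − y‖ for all x, y ∈ ℝ^m. Define P(w) := (1/n)·Σ_{j=1}^n φ_j(X_j^T w) + (λ/2)·‖w‖² for w ∈ ℝ^d, and let w* be a global minimizer of P. Then for every w ∈ ℝ^d: (1/n)·Σ_{j=1}^n (1/l_j)·‖∇φ_j(X_j^T w) − ∇φ_j(X_j^T w*)‖² ≤ 2·(P(w) − P(w*) − (λ/2)·‖w − w*‖²). -/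

import Mathlib

open scoped RealInnerProductSpace
open InnerProductSpace Set
variable {F : Type*} [NormedAddCommGroup F] [InnerProductSpace ℝ F] [CompleteSpace F]

lemma line_hasDerivAt {f : F → ℝ} (hf : Differentiable ℝ f) (x v : F) (t : ℝ) :
    HasDerivAt (fun s : ℝ => f (x + s • v)) ⟪gradient f (x + t • v), v⟫ t := by
  have h1 : HasDerivAt (fun s : ℝ => x + s • v) v t := by
    simpa using ((hasDerivAt_id t).smul_const v).const_add x
  have h2 := ((hf (x + t • v)).hasGradientAt.hasFDerivAt).comp_hasDerivAt t h1
  simpa [toDual_apply_apply, Function.comp_def] using h2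

lemma first_order {f : F → ℝ} (hconv : ConvexOn ℝ Set.univ f) (hf : Differentiable ℝ f)
    (x v : F) : f x + ⟪gradient f x, v⟫ ≤ f (x + v) := by
  set g : ℝ → ℝ := fun s => f (x + s • v) with hg
  have hgc : ConvexOn ℝ Set.univ g := by
    refine ⟨convex_univ, fun a _ b _ α β hα hβ hαβ => ?_⟩
    obtain rfl : β = 1 - α := by linarith
    show g (α • a + (1 - α) • b) ≤ α • g a + (1 - α) • g b
    have hx : x + (α * a + (1 - α) * b) • v
        = α • (x + a • v) + (1 - α) • (x + b • v) := by module
    have h2 := hconv.2 (Set.mem_univ (x + a • v)) (Set.mem_univ (x + b • v)) hα hβ hαβ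
    simp only [hg, smul_eq_mul] at h2 ⊢
    rw [hx]
    exact h2
  have hd : HasDerivAt g ⟪gradient f x, v⟫ 0 := by
    simpa using line_hasDerivAt hf x v 0
  have hs := hgc.le_slope_of_hasDerivAt (Set.mem_univ (0:ℝ)) (Set.mem_univ (1:ℝ))
    zero_lt_one hd
  have hslope : slope g 0 1 = g 1 - g 0 := by simp [slope_def_field]
  have hg0 : g 0 = f x := by simp [hg]
  have hg1 : g 1 = f (x + v) := by simp [hg]
  rw [hslope, hg0, hg1] at hs
  linarith

lemma descent {f : F → ℝ} (hf : Differentiable ℝ f) {L : ℝ} (hL : 0 ≤ L)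
    (hlip : ∀ x y, ‖gradient f x - gradient f y‖ ≤ L * ‖x - y‖) (x v : F) :
    f (x + v) ≤ f x + ⟪gradient f x, v⟫ + L / 2 * ‖v‖ ^ 2 := by
  set g' : ℝ → ℝ := fun t => ⟪gradient f (x + t • v), v⟫ with hg'
  have hgradc : Continuous (gradient f) := by
    have : LipschitzWith (Real.toNNReal L) (gradient f) := by
      apply LipschitzWith.of_dist_le_mul
      intro a b
      rw [dist_eq_norm, dist_eq_norm]
      calc ‖gradient f a - gradient f b‖ ≤ L * ‖a - b‖ := hlip a b
        _ = Real.toNNReal L * ‖a - b‖ := by rw [Real.coe_toNNReal L hL]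
    exact this.continuous
  have hcont : Continuous g' := by
    apply Continuous.inner
    · exact hgradc.comp (by continuity)
    · exact continuous_const
  have hderiv : ∀ t ∈ Set.uIcc (0:ℝ) 1, HasDerivAt (fun s => f (x + s • v)) (g' t) t :=
    fun t _ => line_hasDerivAt hf x v t
  have hint : IntervalIntegrable g' MeasureTheory.volume 0 1 :=
    hcont.intervalIntegrable 0 1
  have key := intervalIntegral.integral_eq_sub_of_hasDerivAt hderiv hint
  have bound : ∀ t ∈ Set.Icc (0:ℝ) 1, g' t ≤ g' 0 + L * t * ‖v‖ ^ 2 := by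
    intro t ht
    have h1 : g' t - g' 0 = ⟪gradient f (x + t • v) - gradient f (x + (0:ℝ) • v), v⟫ := by
      rw [inner_sub_left]
    have h2 : ⟪gradient f (x + t • v) - gradient f (x + (0:ℝ) • v), v⟫
        ≤ ‖gradient f (x + t • v) - gradient f (x + (0:ℝ) • v)‖ * ‖v‖ :=
      real_inner_le_norm _ _
    have h3 : ‖gradient f (x + t • v) - gradient f (x + (0:ℝ) • v)‖
        ≤ L * (t * ‖v‖) := by
      have := hlip (x + t • v) (x + (0:ℝ) • v)
      have he : ‖(x + t • v) - (x + (0:ℝ) • v)‖ = t * ‖v‖ := by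
        simp [norm_smul, abs_of_nonneg ht.1]
      rw [he] at this; exact this
    nlinarith [norm_nonneg v, mul_le_mul_of_nonneg_right h3 (norm_nonneg v)]
  have hmono : ∫ t in (0:ℝ)..1, g' t ≤ ∫ t in (0:ℝ)..1, (g' 0 + L * t * ‖v‖ ^ 2) := by
    apply intervalIntegral.integral_mono_on zero_le_one hint
    · apply Continuous.intervalIntegrable; continuity
    · exact bound
  have hcalc : ∫ t in (0:ℝ)..1, (g' 0 + L * t * ‖v‖ ^ 2) = g' 0 + L / 2 * ‖v‖ ^ 2 := by
    have hrw : ∀ t : ℝ, g' 0 + L * t * ‖v‖ ^ 2 = g' 0 + (L * ‖v‖ ^ 2) * t := by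
      intro t; ring
    simp_rw [hrw]
    have hi1 : IntervalIntegrable (fun _ : ℝ => g' 0) MeasureTheory.volume 0 1 :=
      intervalIntegrable_const
    have hi2 : IntervalIntegrable (fun t : ℝ => (L * ‖v‖ ^ 2) * t) MeasureTheory.volume 0 1 :=
      (continuous_const.mul continuous_id).intervalIntegrable 0 1
    rw [intervalIntegral.integral_add hi1 hi2, intervalIntegral.integral_const,
      intervalIntegral.integral_const_mul, integral_id]
    simp; ring
  have hg0 : g' 0 = ⟪gradient f x, v⟫ := by simp [hg']
  rw [key] at hmono
  rw [hcalc, hg0] at hmono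
  simp only [one_smul, zero_smul, add_zero] at hmono
  linarith

lemma cocoercive {f : F → ℝ} (hconv : ConvexOn ℝ Set.univ f) (hf : Differentiable ℝ f)
    {L : ℝ} (hL : 0 < L)
    (hlip : ∀ x y, ‖gradient f x - gradient f y‖ ≤ L * ‖x - y‖) (x y : F) :
    f x + ⟪gradient f x, y - x⟫ + 1 / (2 * L) * ‖gradient f y - gradient f x‖ ^ 2 ≤ f y := by
  set d : F := gradient f y - gradient f x with hd
  set z : F := y - (1 / L) • d with hz
  have hA : f x + ⟪gradient f x, z - x⟫ ≤ f z := by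
    have := first_order hconv hf x (z - x)
    simpa using this
  have hB : f z ≤ f y + ⟪gradient f y, (-(1/L)) • d⟫ + L / 2 * ‖(-(1/L)) • d‖ ^ 2 := by
    have := descent hf hL.le hlip y ((-(1/L)) • d)
    have hyz : y + (-(1/L)) • d = z := by rw [hz]; module
    rwa [hyz] at this
  have e1 : ⟪gradient f x, z - x⟫ = ⟪gradient f x, y - x⟫ - (1/L) * ⟪gradient f x, d⟫ := by
    rw [hz]
    have : y - (1/L) • d - x = (y - x) - (1/L) • d := by module
    rw [this, inner_sub_right, real_inner_smul_right]
  have e2 : ⟪gradient f y, (-(1/L)) • d⟫ = -(1/L) * ⟪gradient f y, d⟫ := by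
    rw [real_inner_smul_right]
  have e3 : ‖(-(1/L)) • d‖ ^ 2 = (1/L) ^ 2 * ‖d‖ ^ 2 := by
    rw [norm_smul]
    simp [abs_of_nonneg (le_of_lt (by positivity : (0:ℝ) < 1/L)), mul_pow]
  have e4 : ⟪gradient f y, d⟫ - ⟪gradient f x, d⟫ = ‖d‖ ^ 2 := by
    rw [← inner_sub_left, ← hd, real_inner_self_eq_norm_sq]
  rw [e1] at hA
  rw [e2, e3] at hB
  have hL' : L ≠ 0 := ne_of_gt hL
  have : f x + ⟪gradient f x, y - x⟫ - (1/L) * ⟪gradient f x, d⟫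
      ≤ f y - (1/L) * ⟪gradient f y, d⟫ + L / 2 * ((1/L)^2 * ‖d‖^2) := by linarith
  have hfin : f x + ⟪gradient f x, y - x⟫ + (1/L) * ‖d‖^2 - 1/(2*L) * ‖d‖^2 ≤ f y := by
    have h5 : (1/L) * (⟪gradient f y, d⟫ - ⟪gradient f x, d⟫) = (1/L) * ‖d‖^2 := by rw [e4]
    have h6 : L / 2 * ((1/L)^2 * ‖d‖^2) = 1/(2*L) * ‖d‖^2 := by field_simp
    nlinarith
  have h7 : (1/L) * ‖d‖^2 - 1/(2*L) * ‖d‖^2 = 1/(2*L) * ‖d‖^2 := by field_simp; ring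
  linarith

/-- `A^T w` for `A ∈ ℝ^{d×m}`, `w ∈ ℝ^d`, as an element of `ℝ^m`. -/
noncomputable def XTvec {d m : ℕ} (A : Matrix (Fin d) (Fin m) ℝ)
    (w : EuclideanSpace ℝ (Fin d)) : EuclideanSpace ℝ (Fin m) :=
  WithLp.toLp 2 (fun i => ∑ k, A k i * w k)

noncomputable def XTclm {d m : ℕ} (A : Matrix (Fin d) (Fin m) ℝ) :
    EuclideanSpace ℝ (Fin d) →L[ℝ] EuclideanSpace ℝ (Fin m) :=
  LinearMap.toContinuousLinearMap
    { toFun := fun w => XTvec A w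
      map_add' := by
        intro x y; ext i
        simp [XTvec, PiLp.add_apply, mul_add, Finset.sum_add_distrib]
      map_smul' := by
        intro c x; ext i
        simp [XTvec, PiLp.smul_apply, Finset.mul_sum, mul_left_comm] }

lemma XTclm_apply {d m : ℕ} (A : Matrix (Fin d) (Fin m) ℝ)
    (w : EuclideanSpace ℝ (Fin d)) : XTclm A w = XTvec A w := rfl

/-- **Lemma 3.4 (dfSDCA, convex losses).** For convex, `l_j`-smooth losses `φ_j` and the
L2-regularized ERM objective `P`, the weighted sum of squared gradient differences is bounded
by `2(P(w) − P(w*) − (λ/2)‖w − w*‖²)`. -/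
theorem stmt_1 (n d m : ℕ) (hn : 1 ≤ n) (hd : 1 ≤ d) (hm : 1 ≤ m)
    (X : Fin n → Matrix (Fin d) (Fin m) ℝ) (lam : ℝ) (hlam : 0 < lam)
    (φ : Fin n → EuclideanSpace ℝ (Fin m) → ℝ) (l : Fin n → ℝ)
    (hl : ∀ j, 0 < l j)
    (hconv : ∀ j, ConvexOn ℝ Set.univ (φ j))
    (hdiff : ∀ j, Differentiable ℝ (φ j))
    (hsmooth : ∀ j, ∀ x y : EuclideanSpace ℝ (Fin m),
      ‖gradient (φ j) x - gradient (φ j) y‖ ≤ l j * ‖x - y‖)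
    (P : EuclideanSpace ℝ (Fin d) → ℝ)
    (hP : ∀ w, P w = (1 / n) * ∑ j, φ j (XTvec (X j) w) + lam / 2 * ‖w‖ ^ 2)
    (wstar : EuclideanSpace ℝ (Fin d)) (hmin : ∀ w, P wstar ≤ P w) :
    ∀ w : EuclideanSpace ℝ (Fin d),
      (1 / n) * ∑ j, (1 / l j) *
          ‖gradient (φ j) (XTvec (X j) w) - gradient (φ j) (XTvec (X j) wstar)‖ ^ 2
        ≤ 2 * (P w - P wstar - lam / 2 * ‖w - wstar‖ ^ 2) := by
  intro w
  have hnpos : (0:ℝ) < n := by exact_mod_cast Nat.lt_of_lt_of_le Nat.zero_lt_one hn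
  set c : ℝ := 1 / n with hc
  have hcpos : 0 < c := by positivity
  set v : EuclideanSpace ℝ (Fin d) := w - wstar with hv
  -- derivative of P at wstar
  set D : EuclideanSpace ℝ (Fin d) →L[ℝ] ℝ :=
    c • (∑ j, ((toDual ℝ (EuclideanSpace ℝ (Fin m))
        (gradient (φ j) (XTvec (X j) wstar))).comp (XTclm (X j)))) +
    (lam / 2) • ((fderivInnerCLM ℝ (wstar, wstar)).comp
      ((ContinuousLinearMap.id ℝ (EuclideanSpace ℝ (Fin d))).prod
        (ContinuousLinearMap.id ℝ (EuclideanSpace ℝ (Fin d))))) with hD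
  have hterm : ∀ j : Fin n, HasFDerivAt (fun u => φ j (XTvec (X j) u))
      ((toDual ℝ (EuclideanSpace ℝ (Fin m))
        (gradient (φ j) (XTvec (X j) wstar))).comp (XTclm (X j))) wstar := by
    intro j
    exact HasFDerivAt.comp wstar
      ((hdiff j (XTvec (X j) wstar)).hasGradientAt.hasFDerivAt) ((XTclm (X j)).hasFDerivAt)
  have hsum : HasFDerivAt (fun u => ∑ j, φ j (XTvec (X j) u))
      (∑ j, ((toDual ℝ (EuclideanSpace ℝ (Fin m))
        (gradient (φ j) (XTvec (X j) wstar))).comp (XTclm (X j)))) wstar :=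
    HasFDerivAt.fun_sum (fun j _ => hterm j)
  have hinner : HasFDerivAt (fun u : EuclideanSpace ℝ (Fin d) => ⟪u, u⟫_ℝ)
      ((fderivInnerCLM ℝ (wstar, wstar)).comp
        ((ContinuousLinearMap.id ℝ (EuclideanSpace ℝ (Fin d))).prod
          (ContinuousLinearMap.id ℝ (EuclideanSpace ℝ (Fin d))))) wstar :=
    (hasFDerivAt_id wstar).inner ℝ (hasFDerivAt_id wstar)
  have hQ : HasFDerivAt P D wstar := by
    have hPfun : P = fun u => c * ∑ j, φ j (XTvec (X j) u) + lam / 2 * ⟪u, u⟫_ℝ := by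
      funext u; rw [hP u, real_inner_self_eq_norm_sq, hc]
    rw [hPfun, hD]
    exact (hsum.const_mul c).add (hinner.const_mul (lam / 2))
  have hloc : IsLocalMin P wstar := Filter.Eventually.of_forall hmin
  have hD0 : D = 0 := by rw [← hQ.fderiv]; exact hloc.fderiv_eq_zero
  have hopt : c * (∑ j, ⟪gradient (φ j) (XTvec (X j) wstar), XTclm (X j) v⟫_ℝ)
      + lam * ⟪wstar, v⟫_ℝ = 0 := by
    have h0 : D v = 0 := by rw [hD0]; rfl
    rw [hD] at h0
    simp only [ContinuousLinearMap.add_apply, ContinuousLinearMap.smul_apply,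
      ContinuousLinearMap.coe_sum', Finset.sum_apply, ContinuousLinearMap.comp_apply,
      toDual_apply_apply, fderivInnerCLM_apply, ContinuousLinearMap.prod_apply,
      ContinuousLinearMap.coe_id', id_eq, smul_eq_mul] at h0
    have hcomm : ⟪v, wstar⟫_ℝ = ⟪wstar, v⟫_ℝ := real_inner_comm _ _
    rw [hcomm] at h0
    linarith
  -- cocoercivity applied to each loss
  have hkey : ∀ j : Fin n,
      1 / (2 * l j) * ‖gradient (φ j) (XTvec (X j) w) - gradient (φ j) (XTvec (X j) wstar)‖ ^ 2
        ≤ φ j (XTvec (X j) w) - φ j (XTvec (X j) wstar)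
          - ⟪gradient (φ j) (XTvec (X j) wstar), XTclm (X j) v⟫_ℝ := by
    intro j
    have h := cocoercive (hconv j) (hdiff j) (hl j) (hsmooth j)
      (XTvec (X j) wstar) (XTvec (X j) w)
    have hab : XTvec (X j) w - XTvec (X j) wstar = XTclm (X j) v := by
      rw [hv, map_sub, XTclm_apply, XTclm_apply]
    rw [hab] at h
    linarith [h]
  have hkeysum : ∑ j, 1 / (2 * l j)
        * ‖gradient (φ j) (XTvec (X j) w) - gradient (φ j) (XTvec (X j) wstar)‖ ^ 2
      ≤ (∑ j, φ j (XTvec (X j) w)) - (∑ j, φ j (XTvec (X j) wstar))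
        - ∑ j, ⟪gradient (φ j) (XTvec (X j) wstar), XTclm (X j) v⟫_ℝ := by
    have := Finset.sum_le_sum (fun j (_ : j ∈ Finset.univ) => hkey j)
    simpa [Finset.sum_sub_distrib] using this
  -- abbreviations
  set SD : ℝ := ∑ j, (1 / l j)
    * ‖gradient (φ j) (XTvec (X j) w) - gradient (φ j) (XTvec (X j) wstar)‖ ^ 2 with hSD
  set Sh : ℝ := ∑ j, 1 / (2 * l j)
    * ‖gradient (φ j) (XTvec (X j) w) - gradient (φ j) (XTvec (X j) wstar)‖ ^ 2 with hSh
  set Sa : ℝ := ∑ j, φ j (XTvec (X j) w) with hSa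
  set Sb : ℝ := ∑ j, φ j (XTvec (X j) wstar) with hSb
  set Sin : ℝ := ∑ j, ⟪gradient (φ j) (XTvec (X j) wstar), XTclm (X j) v⟫_ℝ with hSin
  have hSD2 : SD = 2 * Sh := by
    rw [hSD, hSh, Finset.mul_sum]
    refine Finset.sum_congr rfl fun j _ => ?_
    have := (hl j).ne'
    field_simp
  have F1 : c * SD ≤ 2 * (c * Sa) - 2 * (c * Sb) - 2 * (c * Sin) := by
    have h := mul_le_mul_of_nonneg_left hkeysum hcpos.le
    calc c * SD = 2 * (c * Sh) := by rw [hSD2]; ring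
      _ ≤ 2 * (c * (Sa - Sb - Sin)) := by linarith [h]
      _ = 2 * (c * Sa) - 2 * (c * Sb) - 2 * (c * Sin) := by ring
  have F2 : c * Sin = -(lam * ⟪wstar, v⟫_ℝ) := by linarith [hopt]
  have F3' : lam * ‖w - wstar‖ ^ 2
      = lam * ‖w‖ ^ 2 - 2 * (lam * ⟪w, wstar⟫_ℝ) + lam * ‖wstar‖ ^ 2 := by
    rw [norm_sub_sq_real]; ring
  have F4' : lam * ⟪wstar, v⟫_ℝ = lam * ⟪w, wstar⟫_ℝ - lam * ‖wstar‖ ^ 2 := by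
    rw [hv, inner_sub_right, real_inner_self_eq_norm_sq, real_inner_comm]; ring
  rw [hP w, hP wstar]
  linarith [F1, F2, F3', F4']
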